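/- (OTA-FL gradient estimation variance bound.) Fix w ∈ ℝ^d, differentiable functions f_1, ..., f_N : ℝ^d → ℝ, real constants G > 0, N₀ > 0, γ_1, ..., γ_N > 0, and q_1, ..., q_N ∈ (0, 1]. On a probability space, let χ_1, ..., χ_N be {0,1}-valued Bernoulli random variables with P(χ_m = 1) = q_m, let g_1, ..., g_N be ℝ^d-valued random vectors satisfying ‖g_m‖ ≤ G almost surely, 𝔼[g_m] = ∇f_m(w), and 𝔼[‖g_m − ∇f_m(w)‖²] ≤ σ_m², and let z be an ℝ^d-valued random vector with 𝔼[z] = 0 and 𝔼[‖z‖²] = d·N₀. Suppose the family of 2N+1 random elements {χ_1, ..., χ_N, g_1, ..., g_N, z} is mutually independent. Define α_m = q_m·γ_m, α = Σ_{m=1}^N α_m, p_m = α_m/α, and ĝ = (1/α)·Σ_{m=1}^N χ_m·γ_m·g_m + z/α. Then 𝔼[‖ĝ − Σ_{m=1}^N p_m·∇f_m(w)‖²] ≤ Σ_{m=1}^N p_m²·G²·(γ_m/α_m − 1) + Σ_{m=1}^N p_m²·σ_m² + d·N₀/α². -/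

import Mathlib

open MeasureTheory ProbabilityTheory
open scoped BigOperators

section Aux

variable {Ω : Type*} [MeasurableSpace Ω] {μ : Measure Ω} {d : ℕ}

lemma my_coord_le_norm (x : EuclideanSpace ℝ (Fin d)) (k : Fin d) : |x k| ≤ ‖x‖ := by
  rw [EuclideanSpace.norm_eq, ← Real.sqrt_sq_eq_abs]
  apply Real.sqrt_le_sqrt
  calc (x k) ^ 2 = ‖x k‖ ^ 2 := by rw [Real.norm_eq_abs, sq_abs]
    _ ≤ ∑ i, ‖x i‖ ^ 2 :=
        Finset.single_le_sum (f := fun i => ‖x i‖ ^ 2) (fun i _ => sq_nonneg _)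
          (Finset.mem_univ k)

lemma my_memℒp_coord {X : Ω → EuclideanSpace ℝ (Fin d)} (hX : MemLp X 2 μ) (k : Fin d) :
    MemLp (fun ω => X ω k) 2 μ := by
  refine hX.of_le ?_ ?_
  · exact (EuclideanSpace.proj (𝕜 := ℝ) k).continuous.comp_aestronglyMeasurable hX.1
  · exact Filter.Eventually.of_forall fun ω => by
      simpa [Real.norm_eq_abs] using my_coord_le_norm (X ω) k

lemma my_integrable_inner {X Y : Ω → EuclideanSpace ℝ (Fin d)}
    (hX : MemLp X 2 μ) (hY : MemLp Y 2 μ) :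
    Integrable (fun ω => (inner ℝ (X ω) (Y ω) : ℝ)) μ := by
  have h := L2.integrable_inner (𝕜 := ℝ) (hX.toLp X) (hY.toLp Y)
  refine h.congr ?_
  filter_upwards [hX.coeFn_toLp, hY.coeFn_toLp] with ω h1 h2
  rw [h1, h2]

lemma my_integrable_mul {a b : Ω → ℝ} (ha : MemLp a 2 μ) (hb : MemLp b 2 μ) :
    Integrable (fun ω => a ω * b ω) μ := by
  refine Integrable.mono' (ha.integrable_sq.add hb.integrable_sq) (ha.1.mul hb.1) ?_
  refine Filter.Eventually.of_forall fun ω => ?_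
  simp only [Pi.add_apply, Real.norm_eq_abs, abs_mul]
  nlinarith [abs_nonneg (a ω), abs_nonneg (b ω), sq_abs (a ω), sq_abs (b ω),
    sq_nonneg (|a ω| - |b ω|)]

variable [IsProbabilityMeasure μ]

lemma my_indep_integral_inner {X Y : Ω → EuclideanSpace ℝ (Fin d)} (h : IndepFun X Y μ)
    (hX : MemLp X 2 μ) (hY : MemLp Y 2 μ) :
    ∫ ω, (inner ℝ (X ω) (Y ω) : ℝ) ∂μ
      = (inner ℝ (∫ ω, X ω ∂μ) (∫ ω, Y ω ∂μ) : ℝ) := by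
  have hXi : Integrable X μ := hX.integrable (by norm_num)
  have hYi : Integrable Y μ := hY.integrable (by norm_num)
  have hcoord : ∀ k : Fin d, Integrable (fun ω => X ω k * Y ω k) μ := fun k =>
    my_integrable_mul (my_memℒp_coord hX k) (my_memℒp_coord hY k)
  have hproj : ∀ k : Fin d, Measurable (fun x : EuclideanSpace ℝ (Fin d) => x k) :=
    fun k => (EuclideanSpace.proj (𝕜 := ℝ) k).continuous.measurable
  calc ∫ ω, (inner ℝ (X ω) (Y ω) : ℝ) ∂μ
      = ∫ ω, ∑ k, X ω k * Y ω k ∂μ := by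
        refine integral_congr_ae (Filter.Eventually.of_forall fun ω => ?_)
        simp [PiLp.inner_apply, RCLike.inner_apply, starRingEnd_apply, mul_comm]
    _ = ∑ k, ∫ ω, X ω k * Y ω k ∂μ := integral_finset_sum _ fun k _ => hcoord k
    _ = ∑ k, (∫ ω, X ω k ∂μ) * (∫ ω, Y ω k ∂μ) := by
        refine Finset.sum_congr rfl fun k _ => ?_
        have hk : IndepFun (fun ω => X ω k) (fun ω => Y ω k) μ :=
          h.comp (hproj k) (hproj k)
        exact hk.integral_mul_eq_mul_integral ((EuclideanSpace.proj (𝕜 := ℝ) k).continuous.comp_aestronglyMeasurable hX.1)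
          ((EuclideanSpace.proj (𝕜 := ℝ) k).continuous.comp_aestronglyMeasurable hY.1)
    _ = (inner ℝ (∫ ω, X ω ∂μ) (∫ ω, Y ω ∂μ) : ℝ) := by
        rw [PiLp.inner_apply]
        refine Finset.sum_congr rfl fun k _ => ?_
        rw [RCLike.inner_apply, starRingEnd_apply, star_trivial]
        have hL : ∀ v : EuclideanSpace ℝ (Fin d), EuclideanSpace.proj (𝕜 := ℝ) k v = v k :=
          fun _ => rfl
        have e1 := ContinuousLinearMap.integral_comp_comm (EuclideanSpace.proj k) hXi
        have e2 := ContinuousLinearMap.integral_comp_comm (EuclideanSpace.proj k) hYi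
        simp only [hL] at e1 e2
        rw [e1, e2, mul_comm]

lemma my_indep_integral_smul {c : Ω → ℝ} {X : Ω → EuclideanSpace ℝ (Fin d)}
    (h : IndepFun c X μ) (hc : MemLp c 2 μ) (hX : MemLp X 2 μ)
    (hcX : Integrable (fun ω => c ω • X ω) μ) :
    ∫ ω, c ω • X ω ∂μ = (∫ ω, c ω ∂μ) • ∫ ω, X ω ∂μ := by
  have hXi : Integrable X μ := hX.integrable (by norm_num)
  ext k
  have hL : ∀ v : EuclideanSpace ℝ (Fin d), EuclideanSpace.proj (𝕜 := ℝ) k v = v k :=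
    fun _ => rfl
  have h1 := ContinuousLinearMap.integral_comp_comm (EuclideanSpace.proj k) hcX
  have h2 := ContinuousLinearMap.integral_comp_comm (EuclideanSpace.proj k) hXi
  simp only [hL] at h1 h2
  have hproj : Measurable (fun x : EuclideanSpace ℝ (Fin d) => x k) :=
    (EuclideanSpace.proj (𝕜 := ℝ) k).continuous.measurable
  have hk : IndepFun c (fun ω => X ω k) μ := h.comp measurable_id hproj
  have h3 : ∫ ω, c ω * X ω k ∂μ = (∫ ω, c ω ∂μ) * ∫ ω, X ω k ∂μ :=
    hk.integral_mul_eq_mul_integral hc.1 ((EuclideanSpace.proj (𝕜 := ℝ) k).continuous.comp_aestronglyMeasurable hX.1)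
  calc (∫ ω, c ω • X ω ∂μ) k = ∫ ω, (c ω • X ω) k ∂μ := h1.symm
    _ = ∫ ω, c ω * X ω k ∂μ := rfl
    _ = (∫ ω, c ω ∂μ) * ∫ ω, X ω k ∂μ := h3
    _ = ((∫ ω, c ω ∂μ) • ∫ ω, X ω ∂μ) k := by
        simp only [PiLp.smul_apply, smul_eq_mul]; rw [← h2]


omit [IsProbabilityMeasure μ] in
lemma my_iIndepFun_congr {ι : Type*} {β : ι → Type*} {m : ∀ i, MeasurableSpace (β i)}
    {f f' : ∀ i, Ω → β i} (h : iIndepFun (m := m) f μ) (h' : ∀ i, f i =ᵐ[μ] f' i) :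
    iIndepFun (m := m) f' μ := by
  rw [iIndepFun_iff_measure_inter_preimage_eq_mul] at h ⊢
  intro S sets hsets
  have h1 : ∀ i : ι, (f' i ⁻¹' sets i : Set Ω) =ᵐ[μ] f i ⁻¹' sets i := by
    intro i
    refine Filter.eventuallyEq_set.2 ?_
    filter_upwards [h' i] with ω hω
    simp [Set.mem_preimage, hω]
  have h2 : ((⋂ i ∈ S, f' i ⁻¹' sets i) : Set Ω) =ᵐ[μ] ⋂ i ∈ S, f i ⁻¹' sets i := by
    refine Filter.eventuallyEq_set.2 ?_
    have hall : ∀ᵐ ω ∂μ, ∀ i ∈ S, f i ω = f' i ω :=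
      (ae_ball_iff S.countable_toSet).2 fun i _ => h' i
    filter_upwards [hall] with ω hω
    simp only [Set.mem_iInter, Set.mem_preimage]
    constructor
    · intro hmem i hi; rw [hω i hi]; exact hmem i hi
    · intro hmem i hi; rw [← hω i hi]; exact hmem i hi
  rw [measure_congr h2, h S hsets]
  exact Finset.prod_congr rfl fun i _ => (measure_congr (h1 i)).symm

lemma my_orth_sum {ι : Type*} [Fintype ι]
    {W : ι → Ω → EuclideanSpace ℝ (Fin d)}
    (hW : ∀ i, MemLp (W i) 2 μ) (hmean : ∀ i, ∫ ω, W i ω ∂μ = 0)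
    (hind : ∀ i j, i ≠ j → IndepFun (W i) (W j) μ) :
    ∫ ω, ‖∑ i, W i ω‖ ^ 2 ∂μ = ∑ i, ∫ ω, ‖W i ω‖ ^ 2 ∂μ := by
  have hint : ∀ i j : ι, Integrable (fun ω => (inner ℝ (W i ω) (W j ω) : ℝ)) μ :=
    fun i j => my_integrable_inner (hW i) (hW j)
  calc ∫ ω, ‖∑ i, W i ω‖ ^ 2 ∂μ
      = ∫ ω, ∑ i, ∑ j, (inner ℝ (W i ω) (W j ω) : ℝ) ∂μ := by
        refine integral_congr_ae (Filter.Eventually.of_forall fun ω => ?_)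
        show ‖∑ i, W i ω‖ ^ 2 = ∑ i, ∑ j, (inner ℝ (W i ω) (W j ω) : ℝ)
        rw [← real_inner_self_eq_norm_sq, sum_inner]
        exact Finset.sum_congr rfl fun i _ => inner_sum _ _ _
    _ = ∑ i, ∑ j, ∫ ω, (inner ℝ (W i ω) (W j ω) : ℝ) ∂μ := by
        rw [integral_finset_sum _ fun i _ => integrable_finset_sum _ fun j _ => hint i j]
        exact Finset.sum_congr rfl fun i _ => integral_finset_sum _ fun j _ => hint i j
    _ = ∑ i, ∫ ω, (inner ℝ (W i ω) (W i ω) : ℝ) ∂μ := by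
        refine Finset.sum_congr rfl fun i _ => ?_
        refine Finset.sum_eq_single i (fun j _ hji => ?_) (fun h => absurd (Finset.mem_univ i) h)
        rw [my_indep_integral_inner (hind i j (Ne.symm hji)) (hW i) (hW j), hmean i,
          inner_zero_left]
    _ = ∑ i, ∫ ω, ‖W i ω‖ ^ 2 ∂μ := by
        refine Finset.sum_congr rfl fun i _ => integral_congr_ae
          (Filter.Eventually.of_forall fun ω => ?_)
        show (inner ℝ (W i ω) (W i ω) : ℝ) = ‖W i ω‖ ^ 2
        rw [real_inner_self_eq_norm_sq]


lemma my_term_eq (qm γm σm G α : ℝ) (hq : qm ≠ 0) (hγ : γm ≠ 0) (hα : α ≠ 0) :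
    (1 / α ^ 2) * (qm ^ 2 * γm ^ 2 * σm ^ 2 + qm * (1 - qm) * γm ^ 2 * G ^ 2)
      = (qm * γm / α) ^ 2 * G ^ 2 * (γm / (qm * γm) - 1) + (qm * γm / α) ^ 2 * σm ^ 2 := by
  field_simp
  ring

end Aux

/-- The index type for the family `{χ_1, ..., χ_N, g_1, ..., g_N, z}` of `2N+1`
random elements in the OTA-FL scheme. -/
abbrev otaIndex (N : ℕ) : Type := Fin N ⊕ (Fin N ⊕ Unit)

/-- Codomain types of the family: the `χ_m` are real-valued, the `g_m` and `z`
are `ℝ^d`-valued. -/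
abbrev otaType (d N : ℕ) : otaIndex N → Type :=
  Sum.elim (fun _ => ℝ)
    (Sum.elim (fun _ => EuclideanSpace ℝ (Fin d)) (fun _ => EuclideanSpace ℝ (Fin d)))

/-- The canonical measurable-space structure on each codomain. -/
def otaMS (d N : ℕ) : ∀ i : otaIndex N, MeasurableSpace (otaType d N i)
  | .inl _ => inferInstanceAs (MeasurableSpace ℝ)
  | .inr (.inl _) => inferInstanceAs (MeasurableSpace (EuclideanSpace ℝ (Fin d)))
  | .inr (.inr _) => inferInstanceAs (MeasurableSpace (EuclideanSpace ℝ (Fin d)))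

/-- The family `{χ_1, ..., χ_N, g_1, ..., g_N, z}` as a single indexed family. -/
def otaFamily {Ω : Type*} {d N : ℕ} (χ : Fin N → Ω → ℝ)
    (g : Fin N → Ω → EuclideanSpace ℝ (Fin d)) (z : Ω → EuclideanSpace ℝ (Fin d)) :
    ∀ i : otaIndex N, Ω → otaType d N i
  | .inl m => χ m
  | .inr (.inl m) => g m
  | .inr (.inr _) => z

/-- OTA-FL gradient estimation variance bound (Lemma 1). -/
theorem ota_fl_variance_bound
    {d N : ℕ}
    (w : EuclideanSpace ℝ (Fin d))
    (f : Fin N → EuclideanSpace ℝ (Fin d) → ℝ)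
    (hdiff : ∀ m x, DifferentiableAt ℝ (f m) x)
    (G N₀ : ℝ) (hG : 0 < G) (hN₀ : 0 < N₀)
    (γ : Fin N → ℝ) (hγ : ∀ m, 0 < γ m)
    (q : Fin N → ℝ) (hq : ∀ m, q m ∈ Set.Ioc (0 : ℝ) 1)
    (σ : Fin N → ℝ)
    {Ω : Type*} [MeasurableSpace Ω] (P : Measure Ω) [IsProbabilityMeasure P]
    (χ : Fin N → Ω → ℝ)
    (g : Fin N → Ω → EuclideanSpace ℝ (Fin d))
    (z : Ω → EuclideanSpace ℝ (Fin d))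
    (hχmeas : ∀ m, Measurable (χ m))
    (hχval : ∀ m, ∀ᵐ ω ∂P, χ m ω = 0 ∨ χ m ω = 1)
    (hχprob : ∀ m, P {ω | χ m ω = 1} = ENNReal.ofReal (q m))
    (hgmeas : ∀ m, AEStronglyMeasurable (g m) P)
    (hgbdd : ∀ m, ∀ᵐ ω ∂P, ‖g m ω‖ ≤ G)
    (hgmean : ∀ m, ∫ ω, g m ω ∂P = gradient (f m) w)
    (hgvar : ∀ m, ∫ ω, ‖g m ω - gradient (f m) w‖ ^ 2 ∂P ≤ σ m ^ 2)
    (hz2 : MemLp z 2 P)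
    (hzmean : ∫ ω, z ω ∂P = 0)
    (hzvar : ∫ ω, ‖z ω‖ ^ 2 ∂P = d * N₀)
    (hindep : iIndepFun (m := otaMS d N) (otaFamily χ g z) P)
    -- definitions of the design quantities
    (αm : Fin N → ℝ) (hαm : ∀ m, αm m = q m * γ m)
    (α : ℝ) (hα : α = ∑ m, αm m)
    (p : Fin N → ℝ) (hp : ∀ m, p m = αm m / α)
    (ghat : Ω → EuclideanSpace ℝ (Fin d))
    (hghat : ghat = fun ω => (1 / α) • ∑ m, (χ m ω * γ m) • g m ω + (1 / α) • z ω) :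
    ∫ ω, ‖ghat ω - ∑ m, p m • gradient (f m) w‖ ^ 2 ∂P ≤
      (∑ m, p m ^ 2 * G ^ 2 * (γ m / αm m - 1))
        + (∑ m, p m ^ 2 * σ m ^ 2) + d * N₀ / α ^ 2 := by
  classical
  rcases Nat.eq_zero_or_pos N with hN0 | hNpos
  · subst hN0
    have hα0 : α = 0 := by simp [hα]
    have hgh : ghat = fun _ => 0 := by
      rw [hghat]; funext ω; simp [hα0]
    simp [hgh, hα0]
  haveI : Nonempty (Fin N) := Fin.pos_iff_nonempty.mp hNpos
  have hq0 : ∀ m, 0 < q m := fun m => (hq m).1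
  have hq1 : ∀ m, q m ≤ 1 := fun m => (hq m).2
  have hαm_pos : ∀ m, 0 < αm m := fun m => by
    rw [hαm]; exact mul_pos (hq0 m) (hγ m)
  have hαpos : 0 < α := by
    rw [hα]; exact Finset.sum_pos (fun m _ => hαm_pos m) Finset.univ_nonempty
  set gr : Fin N → EuclideanSpace ℝ (Fin d) := fun m => gradient (f m) w with hgr
  --------------------------------------------------------------------------
  -- measurable modifications of g and z
  --------------------------------------------------------------------------
  set g' : Fin N → Ω → EuclideanSpace ℝ (Fin d) := fun m => (hgmeas m).mk (g m) with hg'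
  set z' : Ω → EuclideanSpace ℝ (Fin d) := hz2.1.mk z with hz'
  have hgg' : ∀ m, g m =ᵐ[P] g' m := fun m => (hgmeas m).ae_eq_mk
  have hzz' : z =ᵐ[P] z' := hz2.1.ae_eq_mk
  have hg'meas : ∀ m, Measurable (g' m) := fun m =>
    (hgmeas m).stronglyMeasurable_mk.measurable
  have hz'meas : Measurable z' := hz2.1.stronglyMeasurable_mk.measurable
  have hg'bdd : ∀ m, ∀ᵐ ω ∂P, ‖g' m ω‖ ≤ G := fun m => by
    filter_upwards [hgbdd m, hgg' m] with ω h1 h2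
    rw [← h2]; exact h1
  have hg'mean : ∀ m, ∫ ω, g' m ω ∂P = gr m := fun m => by
    rw [← integral_congr_ae (hgg' m)]; exact hgmean m
  have hg'2 : ∀ m, MemLp (g' m) 2 P := fun m =>
    MemLp.of_bound (hg'meas m).aestronglyMeasurable G (hg'bdd m)
  have hg'int : ∀ m, Integrable (g' m) P := fun m => (hg'2 m).integrable (by norm_num)
  have hz'2 : MemLp z' 2 P := hz2.ae_eq hzz'
  have hz'mean : ∫ ω, z' ω ∂P = 0 := by
    rw [← integral_congr_ae hzz']; exact hzmean
  have hz'var : ∫ ω, ‖z' ω‖ ^ 2 ∂P = (d : ℝ) * N₀ := by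
    rw [← hzvar]
    refine integral_congr_ae ?_
    filter_upwards [hzz'] with ω h
    rw [h]
  have hg'var : ∀ m, ∫ ω, ‖g' m ω - gr m‖ ^ 2 ∂P ≤ σ m ^ 2 := fun m => by
    refine le_trans (le_of_eq (integral_congr_ae ?_)) (hgvar m)
    filter_upwards [hgg' m] with ω h
    rw [h]
  --------------------------------------------------------------------------
  -- basic facts about χ
  --------------------------------------------------------------------------
  have hχbdd : ∀ m, ∀ᵐ ω ∂P, ‖χ m ω‖ ≤ 1 := fun m => by
    filter_upwards [hχval m] with ω h
    rcases h with h | h <;> simp [h]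
  have hχ2 : ∀ m, MemLp (χ m) 2 P := fun m =>
    MemLp.of_bound (hχmeas m).aestronglyMeasurable 1 (hχbdd m)
  have hχint : ∀ m, ∫ ω, χ m ω ∂P = q m := fun m => by
    have hs : MeasurableSet {ω | χ m ω = 1} := hχmeas m (measurableSet_singleton 1)
    have heq : χ m =ᵐ[P] Set.indicator {ω | χ m ω = 1} (fun _ => (1 : ℝ)) := by
      filter_upwards [hχval m] with ω hω
      rcases hω with h0 | h1
      · rw [h0, Set.indicator_of_notMem (by simp [Set.mem_setOf_eq, h0])]
      · rw [h1]; exact (Set.indicator_of_mem h1 (fun _ => (1 : ℝ))).symm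
    rw [integral_congr_ae heq, integral_indicator_const (1 : ℝ) hs, smul_eq_mul, mul_one,
      Measure.real, hχprob m, ENNReal.toReal_ofReal (hq0 m).le]
  have hχsq : ∀ m, (fun ω => χ m ω * χ m ω) =ᵐ[P] χ m := fun m => by
    filter_upwards [hχval m] with ω h
    rcases h with h | h <;> simp [h]
  --------------------------------------------------------------------------
  -- independence of the measurable modification family
  --------------------------------------------------------------------------
  have hfam' : iIndepFun (m := otaMS d N) (otaFamily χ g' z') P := by
    refine my_iIndepFun_congr hindep ?_
    rintro (m | m | u)
    · exact Filter.EventuallyEq.rfl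
    · exact hgg' m
    · exact hzz'
  have hfmeas' : ∀ i, @Measurable Ω (otaType d N i) _ (otaMS d N i) (otaFamily χ g' z' i) := by
    rintro (m | m | u)
    · exact hχmeas m
    · exact hg'meas m
    · exact hz'meas
  --------------------------------------------------------------------------
  -- the centered summands
  --------------------------------------------------------------------------
  set φ : Fin N → ℝ × EuclideanSpace ℝ (Fin d) → EuclideanSpace ℝ (Fin d) :=
    fun m x => (x.1 * γ m) • x.2 - αm m • gr m with hφ
  have hφmeas : ∀ m, Measurable (φ m) := fun m =>
    ((measurable_fst.mul_const _).smul measurable_snd).sub measurable_const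
  set W : (Fin N ⊕ Unit) → Ω → EuclideanSpace ℝ (Fin d) :=
    Sum.elim (fun m ω => (χ m ω * γ m) • g' m ω - αm m • gr m) (fun _ => z') with hWdef
  have hχg'indep : ∀ m, IndepFun (χ m) (g' m) P :=
    fun m => hfam'.indepFun (i := Sum.inl m) (j := Sum.inr (Sum.inl m)) (by simp)
  have hWpair : ∀ i j, i ≠ j → IndepFun (W i) (W j) P := by
    rintro (m | u) (m' | u') hij
    · have hmm' : m ≠ m' := fun h => hij (by rw [h])
      have h4 := hfam'.indepFun_prodMk_prodMk hfmeas'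
        (Sum.inl m) (Sum.inr (Sum.inl m)) (Sum.inl m') (Sum.inr (Sum.inl m'))
        (by simp [hmm']) (by simp) (by simp) (by simp [hmm'])
      exact h4.comp (hφmeas m) (hφmeas m')
    · have h4 := hfam'.indepFun_prodMk hfmeas'
        (Sum.inl m) (Sum.inr (Sum.inl m)) (Sum.inr (Sum.inr ())) (by simp) (by simp)
      exact h4.comp (hφmeas m) measurable_id
    · have h4 := hfam'.indepFun_prodMk hfmeas'
        (Sum.inl m') (Sum.inr (Sum.inl m')) (Sum.inr (Sum.inr ())) (by simp) (by simp)
      exact (h4.comp (hφmeas m') measurable_id).symm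
    · exact absurd rfl hij
  have hWbdd : ∀ m, ∀ᵐ ω ∂P, ‖W (Sum.inl m) ω‖ ≤ γ m * G + ‖αm m • gr m‖ := fun m => by
    filter_upwards [hχbdd m, hg'bdd m] with ω h1 h2
    calc ‖(χ m ω * γ m) • g' m ω - αm m • gr m‖
        ≤ ‖(χ m ω * γ m) • g' m ω‖ + ‖αm m • gr m‖ := norm_sub_le _ _
      _ ≤ γ m * G + ‖αm m • gr m‖ := by
          refine add_le_add_left ?_ _
          rw [norm_smul]
          have hs : ‖χ m ω * γ m‖ ≤ γ m := by
            rw [Real.norm_eq_abs, abs_mul, abs_of_pos (hγ m)]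
            calc |χ m ω| * γ m ≤ 1 * γ m := by
                  refine mul_le_mul_of_nonneg_right ?_ (hγ m).le
                  rw [Real.norm_eq_abs] at h1; exact h1
              _ = γ m := one_mul _
          exact mul_le_mul hs h2 (norm_nonneg _) (hγ m).le
  have hWaesm : ∀ m, AEStronglyMeasurable (W (Sum.inl m)) P := fun m =>
    ((((hχmeas m).mul_const (γ m)).smul (hg'meas m)).sub measurable_const).aestronglyMeasurable
  have hW2 : ∀ i, MemLp (W i) 2 P := by
    rintro (m | u)
    · exact MemLp.of_bound (hWaesm m) _ (hWbdd m)
    · exact hz'2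
  --------------------------------------------------------------------------
  -- each summand has mean zero
  --------------------------------------------------------------------------
  have hsmulint : ∀ m, Integrable (fun ω => χ m ω • g' m ω) P := fun m => by
    refine Integrable.mono' (integrable_const G) ?_ ?_
    · exact ((hχmeas m).smul (hg'meas m)).aestronglyMeasurable
    · filter_upwards [hχbdd m, hg'bdd m] with ω h1 h2
      rw [norm_smul]
      calc ‖χ m ω‖ * ‖g' m ω‖ ≤ 1 * G :=
            mul_le_mul h1 h2 (norm_nonneg _) zero_le_one
        _ = G := one_mul _
  have hχsmul : ∀ m, ∫ ω, χ m ω • g' m ω ∂P = q m • gr m := fun m => by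
    rw [my_indep_integral_smul (hχg'indep m) (hχ2 m) (hg'2 m) (hsmulint m), hχint m,
      hg'mean m]
  have hWmean : ∀ i, ∫ ω, W i ω ∂P = 0 := by
    rintro (m | u)
    · show ∫ ω, ((χ m ω * γ m) • g' m ω - αm m • gr m) ∂P = 0
      have h1 : (fun ω => (χ m ω * γ m) • g' m ω) = fun ω => γ m • (χ m ω • g' m ω) := by
        funext ω; rw [smul_smul, mul_comm]
      have h2 : Integrable (fun ω => (χ m ω * γ m) • g' m ω) P := by
        rw [h1]; exact (hsmulint m).smul (γ m)
      rw [integral_sub h2 (integrable_const _), integral_const]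
      simp only [measure_univ, ENNReal.toReal_one, probReal_univ, one_smul]
      rw [h1, integral_smul, hχsmul m, smul_smul, hαm m, mul_comm (γ m) (q m), sub_self]
    · exact hz'mean
  --------------------------------------------------------------------------
  -- second moments
  --------------------------------------------------------------------------
  have hnormsq_int : ∀ m, Integrable (fun ω => ‖g' m ω‖ ^ 2) P := fun m =>
    (hg'2 m).norm.integrable_sq
  have hIle : ∀ m, ∫ ω, ‖g' m ω‖ ^ 2 ∂P ≤ G ^ 2 := fun m => by
    have hb : ∀ᵐ ω ∂P, ‖g' m ω‖ ^ 2 ≤ G ^ 2 := by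
      filter_upwards [hg'bdd m] with ω h
      exact pow_le_pow_left₀ (norm_nonneg _) h 2
    calc ∫ ω, ‖g' m ω‖ ^ 2 ∂P ≤ ∫ _ω, G ^ 2 ∂P :=
          integral_mono_ae (hnormsq_int m) (integrable_const _) hb
      _ = G ^ 2 := by simp
  have hinner_int : ∀ m, Integrable (fun ω => (inner ℝ (g' m ω) (gr m) : ℝ)) P := fun m =>
    my_integrable_inner (hg'2 m) (memLp_const _)
  have hinner_eq : ∀ m, ∫ ω, (inner ℝ (g' m ω) (gr m) : ℝ) ∂P = ‖gr m‖ ^ 2 := fun m => by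
    have h1 : ∀ ω, (inner ℝ (g' m ω) (gr m) : ℝ) = (inner ℝ (gr m) (g' m ω) : ℝ) :=
      fun ω => real_inner_comm _ _
    calc ∫ ω, (inner ℝ (g' m ω) (gr m) : ℝ) ∂P
        = ∫ ω, (inner ℝ (gr m) (g' m ω) : ℝ) ∂P := by simp_rw [h1]
      _ = (inner ℝ (gr m) (∫ ω, g' m ω ∂P) : ℝ) := integral_inner (hg'int m) (gr m)
      _ = ‖gr m‖ ^ 2 := by rw [hg'mean m, real_inner_self_eq_norm_sq]
  have hvar_id : ∀ m, ∫ ω, ‖g' m ω - gr m‖ ^ 2 ∂P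
      = ∫ ω, ‖g' m ω‖ ^ 2 ∂P - ‖gr m‖ ^ 2 := fun m => by
    have hexp : (fun ω => ‖g' m ω - gr m‖ ^ 2)
        = fun ω => ‖g' m ω‖ ^ 2 - 2 * (inner ℝ (g' m ω) (gr m) : ℝ) + ‖gr m‖ ^ 2 := by
      funext ω; exact norm_sub_sq_real _ _
    have i1 : Integrable (fun ω => ‖g' m ω‖ ^ 2 - 2 * (inner ℝ (g' m ω) (gr m) : ℝ)) P :=
      (hnormsq_int m).sub ((hinner_int m).const_mul 2)
    rw [hexp, integral_add i1 (integrable_const _),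
      integral_sub (hnormsq_int m) ((hinner_int m).const_mul 2), integral_const_mul,
      hinner_eq m, integral_const]
    simp only [measure_univ, ENNReal.toReal_one, probReal_univ, smul_eq_mul, one_mul]
    ring
  -- the key second-moment identity for each device term
  have hχnormsq_int : ∀ m, Integrable (fun ω => χ m ω * ‖g' m ω‖ ^ 2) P := fun m => by
    refine Integrable.mono' (integrable_const (G ^ 2)) ?_ ?_
    · exact ((hχmeas m).mul ((hg'meas m).norm.pow_const 2)).aestronglyMeasurable
    · filter_upwards [hχbdd m, hg'bdd m] with ω h1 h2
      rw [Real.norm_eq_abs, abs_mul]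
      calc |χ m ω| * |‖g' m ω‖ ^ 2| ≤ 1 * G ^ 2 := by
            refine mul_le_mul h1 ?_ (abs_nonneg _) zero_le_one
            rw [abs_of_nonneg (by positivity)]
            exact pow_le_pow_left₀ (norm_nonneg _) h2 2
        _ = G ^ 2 := one_mul _
  have hχinner_int : ∀ m, Integrable (fun ω => χ m ω * (inner ℝ (g' m ω) (gr m) : ℝ)) P :=
    fun m => by
    refine Integrable.mono' (integrable_const (G * ‖gr m‖)) ?_ ?_
    · refine ((hχmeas m).mul ?_).aestronglyMeasurable
      exact Continuous.measurable (Continuous.inner continuous_id continuous_const)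
        |>.comp (hg'meas m)
    · filter_upwards [hχbdd m, hg'bdd m] with ω h1 h2
      rw [Real.norm_eq_abs, abs_mul]
      calc |χ m ω| * |(inner ℝ (g' m ω) (gr m) : ℝ)| ≤ 1 * (G * ‖gr m‖) := by
            refine mul_le_mul h1 ?_ (abs_nonneg _) zero_le_one
            calc |(inner ℝ (g' m ω) (gr m) : ℝ)| ≤ ‖g' m ω‖ * ‖gr m‖ :=
                  abs_real_inner_le_norm _ _
              _ ≤ G * ‖gr m‖ := mul_le_mul_of_nonneg_right h2 (norm_nonneg _)
        _ = G * ‖gr m‖ := one_mul _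
  have hχnormsq : ∀ m, ∫ ω, χ m ω * ‖g' m ω‖ ^ 2 ∂P
      = q m * ∫ ω, ‖g' m ω‖ ^ 2 ∂P := fun m => by
    have hind : IndepFun (χ m) (fun ω => ‖g' m ω‖ ^ 2) P :=
      (hχg'indep m).comp measurable_id (measurable_norm.pow_const 2)
    have := hind.integral_mul_eq_mul_integral (hχmeas m).aestronglyMeasurable
      ((hg'meas m).norm.pow_const 2).aestronglyMeasurable
    rw [show (∫ ω, χ m ω ∂P) = q m from hχint m] at this
    exact this
  have hχinner : ∀ m, ∫ ω, χ m ω * (inner ℝ (g' m ω) (gr m) : ℝ) ∂P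
      = q m * ‖gr m‖ ^ 2 := fun m => by
    have hmeas2 : Measurable (fun v : EuclideanSpace ℝ (Fin d) => (inner ℝ v (gr m) : ℝ)) :=
      Continuous.measurable (Continuous.inner continuous_id continuous_const)
    have hind : IndepFun (χ m) (fun ω => (inner ℝ (g' m ω) (gr m) : ℝ)) P :=
      (hχg'indep m).comp measurable_id hmeas2
    have := hind.integral_mul_eq_mul_integral (hχmeas m).aestronglyMeasurable
      (hmeas2.comp (hg'meas m)).aestronglyMeasurable
    rw [show (∫ ω, χ m ω ∂P) = q m from hχint m, hinner_eq m] at this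
    exact this
  have hWsq : ∀ m, ∫ ω, ‖W (Sum.inl m) ω‖ ^ 2 ∂P
      = q m * γ m ^ 2 * (∫ ω, ‖g' m ω‖ ^ 2 ∂P) - q m ^ 2 * γ m ^ 2 * ‖gr m‖ ^ 2 := by
    intro m
    have hexp : (fun ω => ‖W (Sum.inl m) ω‖ ^ 2) =ᵐ[P]
        fun ω => γ m ^ 2 * (χ m ω * ‖g' m ω‖ ^ 2)
          - (2 * γ m * αm m) * (χ m ω * (inner ℝ (g' m ω) (gr m) : ℝ))
          + αm m ^ 2 * ‖gr m‖ ^ 2 := by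
      filter_upwards [hχsq m] with ω hω
      show ‖(χ m ω * γ m) • g' m ω - αm m • gr m‖ ^ 2 = _
      rw [norm_sub_sq_real, norm_smul, norm_smul, mul_pow, mul_pow,
        real_inner_smul_left, real_inner_smul_right]
      have e1 : ‖χ m ω * γ m‖ ^ 2 = (χ m ω * χ m ω) * γ m ^ 2 := by
        rw [Real.norm_eq_abs, sq_abs]; ring
      rw [e1, hω]
      have e2 : ‖αm m‖ ^ 2 = αm m ^ 2 := by rw [Real.norm_eq_abs, sq_abs]
      rw [e2]
      ring
    rw [integral_congr_ae hexp]
    have i1 : Integrable (fun ω => γ m ^ 2 * (χ m ω * ‖g' m ω‖ ^ 2)) P :=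
      (hχnormsq_int m).const_mul _
    have i2 : Integrable (fun ω =>
        (2 * γ m * αm m) * (χ m ω * (inner ℝ (g' m ω) (gr m) : ℝ))) P :=
      (hχinner_int m).const_mul _
    have i12 : Integrable (fun ω => γ m ^ 2 * (χ m ω * ‖g' m ω‖ ^ 2)
        - (2 * γ m * αm m) * (χ m ω * (inner ℝ (g' m ω) (gr m) : ℝ))) P := i1.sub i2
    rw [integral_add i12 (integrable_const _), integral_sub i1 i2,
      integral_const_mul, integral_const_mul, integral_const]
    rw [hχnormsq m, hχinner m]
    simp only [measure_univ, ENNReal.toReal_one, probReal_univ, smul_eq_mul, one_mul]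
    rw [hαm m]
    ring
  have hWsq_le : ∀ m, ∫ ω, ‖W (Sum.inl m) ω‖ ^ 2 ∂P
      ≤ q m ^ 2 * γ m ^ 2 * σ m ^ 2 + q m * (1 - q m) * γ m ^ 2 * G ^ 2 := by
    intro m
    rw [hWsq m]
    have hI := hIle m
    have hv : ∫ ω, ‖g' m ω‖ ^ 2 ∂P - ‖gr m‖ ^ 2 ≤ σ m ^ 2 := by
      rw [← hvar_id m]; exact hg'var m
    have e1 : q m ^ 2 * γ m ^ 2 * (∫ ω, ‖g' m ω‖ ^ 2 ∂P - ‖gr m‖ ^ 2)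
        ≤ q m ^ 2 * γ m ^ 2 * σ m ^ 2 :=
      mul_le_mul_of_nonneg_left hv (by positivity)
    have hq1m : 0 ≤ 1 - q m := by linarith [hq1 m]
    have e2 : q m * (1 - q m) * γ m ^ 2 * (∫ ω, ‖g' m ω‖ ^ 2 ∂P)
        ≤ q m * (1 - q m) * γ m ^ 2 * G ^ 2 := by
      refine mul_le_mul_of_nonneg_left hI ?_
      have := (hq0 m).le
      positivity
    have hid : q m * γ m ^ 2 * (∫ ω, ‖g' m ω‖ ^ 2 ∂P) - q m ^ 2 * γ m ^ 2 * ‖gr m‖ ^ 2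
        = q m ^ 2 * γ m ^ 2 * (∫ ω, ‖g' m ω‖ ^ 2 ∂P - ‖gr m‖ ^ 2)
          + q m * (1 - q m) * γ m ^ 2 * (∫ ω, ‖g' m ω‖ ^ 2 ∂P) := by ring
    linarith [e1, e2]
  --------------------------------------------------------------------------
  -- assembling
  --------------------------------------------------------------------------
  have hαne : α ≠ 0 := hαpos.ne'
  have hae : ∀ᵐ ω ∂P, ghat ω - ∑ m, p m • gr m = (1 / α) • ∑ i, W i ω := by
    have hallg : ∀ᵐ ω ∂P, ∀ m, g m ω = g' m ω := ae_all_iff.2 hgg'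
    filter_upwards [hallg, hzz'] with ω h1 h2
    have hB : ∑ m, p m • gr m = (1 / α) • ∑ m, αm m • gr m := by
      rw [Finset.smul_sum]
      refine Finset.sum_congr rfl fun m _ => ?_
      rw [smul_smul, hp m, one_div, div_eq_inv_mul]
    have hsum : ∑ i, W i ω
        = (∑ m, ((χ m ω * γ m) • g' m ω - αm m • gr m)) + z' ω := by
      rw [Fintype.sum_sum_type]
      simp [hWdef]
    rw [hghat, hB, hsum]
    simp only [h2]
    rw [Finset.sum_sub_distrib, smul_add, smul_sub]
    have hg1 : ∑ m, (χ m ω * γ m) • g m ω = ∑ m, (χ m ω * γ m) • g' m ω := by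
      refine Finset.sum_congr rfl fun m _ => by rw [h1 m]
    rw [hg1]
    abel
  have hLHS : ∫ ω, ‖ghat ω - ∑ m, p m • gr m‖ ^ 2 ∂P
      = (1 / α ^ 2) * ∫ ω, ‖∑ i, W i ω‖ ^ 2 ∂P := by
    rw [← integral_const_mul]
    refine integral_congr_ae ?_
    filter_upwards [hae] with ω h
    rw [h, norm_smul, mul_pow, Real.norm_eq_abs, sq_abs, one_div, one_div, inv_pow]
  have horth := my_orth_sum hW2 hWmean hWpair
  have hzsum : ∑ _u : Unit, ∫ ω, ‖W (Sum.inr _u) ω‖ ^ 2 ∂P = (d : ℝ) * N₀ := by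
    simp [hWdef, hz'var]
  rw [hLHS, horth, Fintype.sum_sum_type, hzsum]
  have hsum_le : ∑ m, ∫ ω, ‖W (Sum.inl m) ω‖ ^ 2 ∂P
      ≤ ∑ m, (q m ^ 2 * γ m ^ 2 * σ m ^ 2 + q m * (1 - q m) * γ m ^ 2 * G ^ 2) :=
    Finset.sum_le_sum fun m _ => hWsq_le m
  have hstep : (1 / α ^ 2) * ((∑ m, ∫ ω, ‖W (Sum.inl m) ω‖ ^ 2 ∂P) + (d : ℝ) * N₀)
      ≤ (1 / α ^ 2) * ((∑ m, (q m ^ 2 * γ m ^ 2 * σ m ^ 2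
          + q m * (1 - q m) * γ m ^ 2 * G ^ 2)) + (d : ℝ) * N₀) := by
    refine mul_le_mul_of_nonneg_left ?_ (by positivity)
    linarith [hsum_le]
  refine le_trans hstep (le_of_eq ?_)
  rw [mul_add, Finset.mul_sum]
  have hterm : ∀ m, (1 / α ^ 2) * (q m ^ 2 * γ m ^ 2 * σ m ^ 2
      + q m * (1 - q m) * γ m ^ 2 * G ^ 2)
      = p m ^ 2 * G ^ 2 * (γ m / αm m - 1) + p m ^ 2 * σ m ^ 2 := by
    intro m
    rw [hp m, hαm m]
    exact my_term_eq (q m) (γ m) (σ m) G α (hq0 m).ne' (hγ m).ne' hαne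
  rw [Finset.sum_congr rfl fun m _ => hterm m, Finset.sum_add_distrib]
  rw [one_div, ← div_eq_inv_mul]
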